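/- arXiv:1503.02828 — 2 statements merged into one kernel-verified Lean document; each statement's English description precedes it below -/
import Mathlib

section
/- Let Y ∈ ℝ^{m×n} have SVD Y = U diag(σ) Vᵀ with singular values σ₁ ≥ … ≥ σ_p ≥ 0, and let τ > 0. Then X* = U diag(max(σ − τ, 0)) Vᵀ minimizes X ↦ τ‖X‖_* + (1/2)‖X − Y‖_F² over all X ∈ ℝ^{m×n}. -/
open Matrix BigOperators

/-- Singular values of a real matrix: square roots of the eigenvalues of `Xᴴ * X`. -/
noncomputable def singVals {m n : ℕ} (X : Matrix (Fin m) (Fin n) ℝ) : Fin n → ℝ :=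
  fun i => Real.sqrt ((Matrix.isHermitian_conjTranspose_mul_self X).eigenvalues i)

/-- Nuclear (trace) norm: sum of singular values. -/
noncomputable def nuclearNorm {m n : ℕ} (X : Matrix (Fin m) (Fin n) ℝ) : ℝ :=
  ∑ i, singVals X i

lemma sumsq_zero {k : ℕ} {f : Fin k → ℝ} (h : ∑ t, f t * f t = 0) : ∀ t, f t = 0 := by
  intro t
  have h2 : ∀ i ∈ Finset.univ, (0:ℝ) ≤ f i * f i := fun i _ => mul_self_nonneg _
  have := (Finset.sum_eq_zero_iff_of_nonneg h2).mp h t (Finset.mem_univ t)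
  nlinarith [this]

lemma spectral_package {m n : ℕ} (X : Matrix (Fin m) (Fin n) ℝ) :
    ∃ (q : Fin n → Fin n → ℝ) (w : Fin n → Fin m → ℝ) (e : Fin n → ℝ),
      (∀ j l, ∑ t, q j t * q l t = if j = l then 1 else 0) ∧
      (∀ t r, ∑ j, q j t * q j r = if t = r then 1 else 0) ∧
      (∀ j l, ∑ t, w j t * w l t = if j = l then e j else 0) ∧
      (∀ j, e j = 0 ∨ e j = 1) ∧
      (∀ j, X *ᵥ q j = singVals X j • w j) ∧
      (∀ j, singVals X j * e j = singVals X j) := by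
  set hA := Matrix.isHermitian_conjTranspose_mul_self X with hAdef
  set q : Fin n → Fin n → ℝ := fun j => (hA.eigenvectorBasis j : Fin n → ℝ) with hq
  set lam : Fin n → ℝ := fun j => hA.eigenvalues j with hlam
  have horth : ∀ j l, ∑ t, q j t * q l t = if j = l then 1 else 0 := by
    intro j l
    have := orthonormal_iff_ite.mp hA.eigenvectorBasis.orthonormal j l
    simpa [PiLp.inner_apply, RCLike.inner_apply, q, mul_comm] using this
  have hmv : ∀ j, (Xᵀ * X) *ᵥ q j = lam j • q j := fun j => hA.mulVec_eigenvectorBasis j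
  -- inner products of images
  have hXq : ∀ j l, ∑ t, (X *ᵥ q j) t * (X *ᵥ q l) t = if j = l then lam j else 0 := by
    intro j l
    have h1 : ∑ t, (X *ᵥ q j) t * (X *ᵥ q l) t = (X *ᵥ q j) ⬝ᵥ (X *ᵥ q l) := rfl
    have h2 : q j ⬝ᵥ ((Xᵀ * X) *ᵥ q l) = (X *ᵥ q j) ⬝ᵥ (X *ᵥ q l) := by
      rw [← Matrix.mulVec_mulVec, dotProduct_mulVec, Matrix.vecMul_transpose]
    rw [h1, ← h2, hmv l, dotProduct_smul]
    have h3 : q j ⬝ᵥ q l = if j = l then 1 else 0 := by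
      rw [← horth j l]; rfl
    rw [smul_eq_mul, h3]
    by_cases h : j = l
    · subst h; simp
    · simp [h]
  have hlamnn : ∀ j, 0 ≤ lam j := by
    intro j
    have := hXq j j
    rw [if_pos rfl] at this
    rw [← this]
    exact Finset.sum_nonneg fun t _ => mul_self_nonneg _
  have hs : ∀ j, singVals X j = Real.sqrt (lam j) := fun j => rfl
  have hssq : ∀ j, singVals X j ^ 2 = lam j := by
    intro j; rw [hs j, Real.sq_sqrt (hlamnn j)]
  have hsnn : ∀ j, 0 ≤ singVals X j := fun j => Real.sqrt_nonneg _
  have hszero : ∀ j, singVals X j = 0 → ∀ t, (X *ᵥ q j) t = 0 := by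
    intro j h0
    apply sumsq_zero
    rw [hXq j j, if_pos rfl, ← hssq j, h0]
    norm_num
  set w : Fin n → Fin m → ℝ := fun j =>
    if singVals X j = 0 then 0 else (singVals X j)⁻¹ • (X *ᵥ q j) with hw
  set e : Fin n → ℝ := fun j => if singVals X j = 0 then 0 else 1 with he
  refine ⟨q, w, e, horth, ?_, ?_, ?_, ?_, ?_⟩
  · -- completeness
    set Q : Matrix (Fin n) (Fin n) ℝ := fun t j => q j t with hQ
    have hQ1 : Qᵀ * Q = 1 := by
      ext j l
      rw [Matrix.mul_apply, Matrix.one_apply]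
      exact horth j l
    have hQ2 : Q * Qᵀ = 1 := mul_eq_one_comm.mp hQ1
    intro t r
    have := congrFun (congrFun hQ2 t) r
    rw [Matrix.mul_apply, Matrix.one_apply] at this
    exact this
  · -- w orthogonality
    intro j l
    by_cases hj : singVals X j = 0
    · have : w j = 0 := by simp [hw, hj]
      rw [this]
      have : e j = 0 := by simp [he, hj]
      simp [Pi.zero_apply, this]
    · by_cases hl : singVals X l = 0
      · have hwl : w l = 0 := by simp [hw, hl]
        rw [hwl]
        have : j ≠ l := fun h => hj (h ▸ hl)
        simp [Pi.zero_apply, this]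
      · have hwje : w j = (singVals X j)⁻¹ • (X *ᵥ q j) := by simp [hw, hj]
        have hwle : w l = (singVals X l)⁻¹ • (X *ᵥ q l) := by simp [hw, hl]
        rw [hwje, hwle]
        have : ∑ t, ((singVals X j)⁻¹ • (X *ᵥ q j)) t * ((singVals X l)⁻¹ • (X *ᵥ q l)) t
            = (singVals X j)⁻¹ * (singVals X l)⁻¹ * ∑ t, (X *ᵥ q j) t * (X *ᵥ q l) t := by
          rw [Finset.mul_sum]
          refine Finset.sum_congr rfl fun t _ => ?_
          simp [Pi.smul_apply, smul_eq_mul]; ring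
        rw [this, hXq j l]
        by_cases h : j = l
        · subst h
          rw [if_pos rfl, if_pos rfl]
          have : e j = 1 := by simp [he, hj]
          rw [this, ← hssq j]
          field_simp
        · simp [h, he, hj]
  · intro j
    by_cases hj : singVals X j = 0 <;> simp [he, hj]
  · intro j
    by_cases hj : singVals X j = 0
    · funext t
      rw [hszero j hj t]
      simp [hw, hj]
    · have : w j = (singVals X j)⁻¹ • (X *ᵥ q j) := by simp [hw, hj]
      rw [this, smul_inv_smul₀ hj]
  · intro j
    by_cases hj : singVals X j = 0 <;> simp [he, hj]

lemma bessel {k r : ℕ} (w : Fin r → Fin k → ℝ) (e : Fin r → ℝ)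
    (he : ∀ j, e j = 0 ∨ e j = 1)
    (horth : ∀ j l, ∑ t, w j t * w l t = if j = l then e j else 0)
    (x : Fin k → ℝ) :
    ∑ j, (∑ t, w j t * x t) ^ 2 ≤ ∑ t, x t ^ 2 := by
  set c : Fin r → ℝ := fun j => ∑ t, w j t * x t with hc
  have hce : ∀ j, c j ^ 2 * e j = c j ^ 2 := by
    intro j
    rcases he j with h0 | h1
    · have hw : ∀ t, w j t = 0 := by
        apply sumsq_zero; rw [horth j j]; simp [h0]
      have : c j = 0 := by simp [hc, hw]
      simp [this]
    · simp [h1]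
  have key : (0:ℝ) ≤ ∑ t, (x t - ∑ j, c j * w j t) ^ 2 :=
    Finset.sum_nonneg fun t _ => sq_nonneg _
  have e2 : ∑ t, x t * ∑ j, c j * w j t = ∑ j, c j ^ 2 := by
    simp_rw [Finset.mul_sum]
    rw [Finset.sum_comm]
    refine Finset.sum_congr rfl fun j _ => ?_
    have : ∑ t, x t * (c j * w j t) = c j * ∑ t, w j t * x t := by
      rw [Finset.mul_sum]; congr 1; ext t; ring
    rw [this, show (∑ t, w j t * x t) = c j from rfl]; ring
  have e3 : ∑ t, (∑ j, c j * w j t) * (∑ j, c j * w j t) = ∑ j, c j ^ 2 := by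
    simp_rw [Finset.sum_mul_sum]
    rw [Finset.sum_comm]
    have h5 : ∀ j, ∑ t, ∑ l, (c j * w j t) * (c l * w l t) = c j ^2 * e j := by
      intro j
      rw [Finset.sum_comm]
      have h6 : ∀ l, ∑ t, (c j * w j t) * (c l * w l t)
          = if l = j then c j ^ 2 * e j else 0 := by
        intro l
        have : ∑ t, (c j * w j t) * (c l * w l t) = c j * c l * (if j = l then e j else 0) := by
          rw [← horth j l, Finset.mul_sum]; congr 1; ext t; ring
        rw [this]
        by_cases h : l = j
        · subst h; rw [if_pos rfl, if_pos rfl]; ring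
        · simp [h, Ne.symm h]
      rw [Finset.sum_congr rfl (fun l _ => h6 l), Finset.sum_ite_eq' Finset.univ j]
      simp
    rw [Finset.sum_congr rfl (fun j _ => h5 j)]
    exact Finset.sum_congr rfl (fun j _ => hce j)
  have expand : ∑ t, (x t - ∑ j, c j * w j t) ^ 2
      = ∑ t, x t ^ 2 - ∑ j, c j ^ 2 := by
    have e1 : ∀ t, (x t - ∑ j, c j * w j t) ^ 2
        = x t ^2 - 2 * (x t * ∑ j, c j * w j t) + (∑ j, c j * w j t) * (∑ j, c j * w j t) := by
      intro t; ring
    rw [Finset.sum_congr rfl (fun t _ => e1 t), Finset.sum_add_distrib,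
      Finset.sum_sub_distrib, ← Finset.mul_sum, e2, e3]
    ring
  rw [expand] at key; linarith

/-- key inequality: sum of |uᵢᵀ X vᵢ| over Bessel families is at most the nuclear norm. -/
lemma nuclear_ge {m n p : ℕ} (X : Matrix (Fin m) (Fin n) ℝ)
    (u : Fin p → Fin m → ℝ) (v : Fin p → Fin n → ℝ)
    (hu : ∀ x : Fin m → ℝ, ∑ i, (∑ t, u i t * x t) ^ 2 ≤ ∑ t, x t ^ 2)
    (hv : ∀ x : Fin n → ℝ, ∑ i, (∑ t, v i t * x t) ^ 2 ≤ ∑ t, x t ^ 2) :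
    ∑ i, |∑ t, u i t * (X *ᵥ v i) t| ≤ nuclearNorm X := by
  obtain ⟨q, w, e, hqq, hcomp, hww, he, hXq, hse⟩ := spectral_package X
  have hsnn : ∀ j, 0 ≤ singVals X j := fun j => Real.sqrt_nonneg _
  have hqnorm : ∀ j, ∑ t, q j t ^ 2 = 1 := by
    intro j
    have := hqq j j
    rw [if_pos rfl] at this
    rw [← this]
    exact Finset.sum_congr rfl fun t _ => (sq (q j t)).symm ▸ rfl
  have hwnorm : ∀ j, ∑ t, w j t ^ 2 ≤ 1 := by
    intro j
    have h1 := hww j j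
    rw [if_pos rfl] at h1
    have : ∑ t, w j t ^ 2 = e j := by
      rw [← h1]; exact Finset.sum_congr rfl fun t _ => sq (w j t)
    rw [this]
    rcases he j with h | h <;> simp [h]
  -- decomposition of X *ᵥ x
  have hxv : ∀ (x : Fin n → ℝ) (t' : Fin m),
      (X *ᵥ x) t' = ∑ j, (∑ t, q j t * x t) * (X *ᵥ q j) t' := by
    intro x t'
    have h1 : ∀ j, (∑ t, q j t * x t) * (X *ᵥ q j) t'
        = ∑ a, X t' a * (q j a * (∑ t, q j t * x t)) := by
      intro j
      rw [show (X *ᵥ q j) t' = ∑ a, X t' a * q j a from rfl, Finset.mul_sum]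
      refine Finset.sum_congr rfl fun a _ => ?_; ring
    rw [Finset.sum_congr rfl fun j _ => h1 j, Finset.sum_comm]
    show ∑ a, X t' a * x a = _
    refine Finset.sum_congr rfl fun a _ => ?_
    rw [← Finset.mul_sum]
    congr 1
    have h2 : ∑ j, q j a * ∑ t, q j t * x t = ∑ t, (∑ j, q j a * q j t) * x t := by
      simp_rw [Finset.mul_sum]
      rw [Finset.sum_comm]
      refine Finset.sum_congr rfl fun t _ => ?_
      rw [Finset.sum_mul]
      refine Finset.sum_congr rfl fun j _ => ?_; ring
    rw [h2, Finset.sum_congr rfl fun t (_ : t ∈ Finset.univ) => by rw [hcomp a t]]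
    simp [Finset.sum_ite_eq]
  -- main estimate
  have hinner : ∀ i, ∑ t, u i t * (X *ᵥ v i) t
      = ∑ j, (∑ t, q j t * v i t) * singVals X j * (∑ t', u i t' * w j t') := by
    intro i
    have h1 : ∀ t', u i t' * (X *ᵥ v i) t'
        = ∑ j, (∑ t, q j t * v i t) * (u i t' * (X *ᵥ q j) t') := by
      intro t'
      rw [hxv (v i) t', Finset.mul_sum]
      refine Finset.sum_congr rfl fun j _ => ?_; ring
    rw [Finset.sum_congr rfl fun t' _ => h1 t', Finset.sum_comm]
    refine Finset.sum_congr rfl fun j _ => ?_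
    rw [← Finset.mul_sum]
    have h2 : ∑ t', u i t' * (X *ᵥ q j) t' = singVals X j * ∑ t', u i t' * w j t' := by
      rw [hXq j, Finset.mul_sum]
      refine Finset.sum_congr rfl fun t' _ => ?_
      simp [Pi.smul_apply, smul_eq_mul]; ring
    rw [h2]; ring
  have habs : ∀ i, |∑ t, u i t * (X *ᵥ v i) t|
      ≤ ∑ j, singVals X j * ((∑ t, q j t * v i t) ^ 2 + (∑ t', u i t' * w j t') ^ 2) / 2 := by
    intro i
    rw [hinner i]
    refine (Finset.abs_sum_le_sum_abs _ _).trans ?_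
    refine Finset.sum_le_sum fun j _ => ?_
    set a := ∑ t, q j t * v i t
    set b := ∑ t', u i t' * w j t'
    have h3 : |a * singVals X j * b| = singVals X j * |a * b| := by
      rw [abs_mul (a * singVals X j) b, abs_mul a (singVals X j),
        abs_of_nonneg (hsnn j), abs_mul a b]; ring
    rw [h3]
    have h4 : |a * b| ≤ (a ^ 2 + b ^ 2) / 2 := by
      rcases abs_cases (a * b) with ⟨h, _⟩ | ⟨h, _⟩ <;> nlinarith [sq_nonneg (a - b), sq_nonneg (a + b)]
    calc singVals X j * |a * b| ≤ singVals X j * ((a ^ 2 + b ^ 2) / 2) :=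
          mul_le_mul_of_nonneg_left h4 (hsnn j)
      _ = singVals X j * (a ^ 2 + b ^ 2) / 2 := by ring
  calc ∑ i, |∑ t, u i t * (X *ᵥ v i) t|
      ≤ ∑ i, ∑ j, singVals X j * ((∑ t, q j t * v i t) ^ 2 + (∑ t', u i t' * w j t') ^ 2) / 2 :=
        Finset.sum_le_sum fun i _ => habs i
    _ = ∑ j, singVals X j * ((∑ i, (∑ t, q j t * v i t) ^ 2) + ∑ i, (∑ t', u i t' * w j t') ^ 2) / 2 := by
        rw [Finset.sum_comm]
        refine Finset.sum_congr rfl fun j _ => ?_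
        rw [← Finset.sum_div, ← Finset.mul_sum, Finset.sum_add_distrib]
    _ ≤ ∑ j, singVals X j := by
        refine Finset.sum_le_sum fun j _ => ?_
        have hb1 : ∑ i, (∑ t, q j t * v i t) ^ 2 ≤ 1 := by
          have h5 : ∑ i, (∑ t, v i t * q j t) ^ 2 ≤ ∑ t, q j t ^ 2 := hv (q j)
          rw [hqnorm j] at h5
          refine le_trans (le_of_eq ?_) h5
          refine Finset.sum_congr rfl fun i _ => ?_
          congr 1
          exact Finset.sum_congr rfl fun t _ => mul_comm _ _
        have hb2 : ∑ i, (∑ t', u i t' * w j t') ^ 2 ≤ 1 := by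
          have h5 : ∑ i, (∑ t', u i t' * w j t') ^ 2 ≤ ∑ t', w j t' ^ 2 := hu (w j)
          exact h5.trans (hwnorm j)
        have := hsnn j
        nlinarith
    _ = nuclearNorm X := rfl

lemma nuclear_le {m n p : ℕ} (U : Matrix (Fin m) (Fin p) ℝ) (V : Matrix (Fin n) (Fin p) ℝ)
    (d : Fin p → ℝ) (hd : ∀ i, 0 ≤ d i)
    (hUcol : ∀ i l, ∑ t, U t i * U t l = if i = l then 1 else 0)
    (hVcol : ∀ i l, ∑ t, V t i * V t l = if i = l then 1 else 0) :
    nuclearNorm (U * Matrix.diagonal d * Vᵀ) ≤ ∑ i, d i := by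
  set X : Matrix (Fin m) (Fin n) ℝ := U * Matrix.diagonal d * Vᵀ with hX
  obtain ⟨q, w, e, hqq, hcomp, hww, he, hXq, hse⟩ := spectral_package X
  have hsnn : ∀ j, 0 ≤ singVals X j := fun j => Real.sqrt_nonneg _
  have henn : ∀ j, (0:ℝ) ≤ e j := by intro j; rcases he j with h | h <;> simp [h]
  have hele : ∀ j, e j ≤ 1 := by intro j; rcases he j with h | h <;> simp [h]
  -- entries of X
  have hentry : ∀ t' r, X t' r = ∑ i, d i * U t' i * V r i := by
    intro t' r
    rw [hX, Matrix.mul_apply]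
    refine Finset.sum_congr rfl fun i _ => ?_
    rw [Matrix.mul_diagonal, Matrix.transpose_apply]
    ring
  have hmvd : ∀ (x : Fin n → ℝ) (t' : Fin m),
      (X *ᵥ x) t' = ∑ i, d i * (∑ r, V r i * x r) * U t' i := by
    intro x t'
    rw [show (X *ᵥ x) t' = ∑ r, X t' r * x r from rfl]
    rw [Finset.sum_congr rfl fun r (_ : r ∈ Finset.univ) => by rw [hentry t' r]]
    simp_rw [Finset.sum_mul]
    rw [Finset.sum_comm]
    refine Finset.sum_congr rfl fun i _ => ?_
    conv_rhs => rw [Finset.mul_sum, Finset.sum_mul]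
    refine Finset.sum_congr rfl fun r _ => ?_; ring
  -- s j = ⟨w j, X q j⟩
  have hsval : ∀ j, singVals X j = ∑ t', w j t' * (X *ᵥ q j) t' := by
    intro j
    rw [hXq j]
    have : ∑ t', w j t' * (singVals X j • w j) t' = singVals X j * ∑ t', w j t' * w j t' := by
      rw [Finset.mul_sum]
      refine Finset.sum_congr rfl fun t' _ => ?_
      simp [Pi.smul_apply, smul_eq_mul]; ring
    rw [this, hww j j, if_pos rfl, hse j]
  have hexpand : ∀ j, singVals X j
      = ∑ i, d i * (∑ r, V r i * q j r) * (∑ t', w j t' * U t' i) := by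
    intro j
    rw [hsval j]
    have h1 : ∀ t', w j t' * (X *ᵥ q j) t'
        = ∑ i, d i * (∑ r, V r i * q j r) * (w j t' * U t' i) := by
      intro t'
      rw [hmvd (q j) t', Finset.mul_sum]
      refine Finset.sum_congr rfl fun i _ => ?_; ring
    rw [Finset.sum_congr rfl fun t' _ => h1 t', Finset.sum_comm]
    refine Finset.sum_congr rfl fun i _ => ?_
    rw [← Finset.mul_sum]
  have key : ∀ j, singVals X j
      ≤ ∑ i, d i * ((∑ r, V r i * q j r) ^ 2 + (∑ t', w j t' * U t' i) ^ 2) / 2 := by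
    intro j
    rw [hexpand j]
    refine Finset.sum_le_sum fun i _ => ?_
    set a := ∑ r, V r i * q j r
    set b := ∑ t', w j t' * U t' i
    have := hd i
    nlinarith [sq_nonneg (a - b), sq_nonneg (a + b)]
  calc nuclearNorm X = ∑ j, singVals X j := rfl
    _ ≤ ∑ j, ∑ i, d i * ((∑ r, V r i * q j r) ^ 2 + (∑ t', w j t' * U t' i) ^ 2) / 2 :=
        Finset.sum_le_sum fun j _ => key j
    _ = ∑ i, d i * ((∑ j, (∑ r, V r i * q j r) ^ 2) + ∑ j, (∑ t', w j t' * U t' i) ^ 2) / 2 := by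
        rw [Finset.sum_comm]
        refine Finset.sum_congr rfl fun i _ => ?_
        rw [← Finset.sum_div, ← Finset.mul_sum, Finset.sum_add_distrib]
    _ ≤ ∑ i, d i := by
        refine Finset.sum_le_sum fun i _ => ?_
        have hb1 : ∑ j, (∑ r, V r i * q j r) ^ 2 ≤ 1 := by
          have h5 : ∑ j, (∑ r, q j r * V r i) ^ 2 ≤ ∑ r, V r i ^ 2 := by
            refine bessel q (fun _ => 1) (fun _ => Or.inr rfl) ?_ (fun r => V r i)
            intro j l; exact hqq j l
          have h6 : ∑ r, V r i ^ 2 = 1 := by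
            have := hVcol i i
            rw [if_pos rfl] at this
            rw [← this]
            exact Finset.sum_congr rfl fun r _ => sq (V r i)
          rw [h6] at h5
          refine le_trans (le_of_eq ?_) h5
          refine Finset.sum_congr rfl fun j _ => ?_
          congr 1
          exact Finset.sum_congr rfl fun r _ => mul_comm _ _
        have hb2 : ∑ j, (∑ t', w j t' * U t' i) ^ 2 ≤ 1 := by
          have h5 : ∑ j, (∑ t', w j t' * U t' i) ^ 2 ≤ ∑ t', U t' i ^ 2 :=
            bessel w e he hww (fun t' => U t' i)
          have h6 : ∑ t', U t' i ^ 2 = 1 := by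
            have := hUcol i i
            rw [if_pos rfl] at this
            rw [← this]
            exact Finset.sum_congr rfl fun t' _ => sq (U t' i)
          rw [h6] at h5; exact h5
        have := hd i
        nlinarith

lemma frob_eq_trace {m n : ℕ} (A B : Matrix (Fin m) (Fin n) ℝ) :
    ∑ t, ∑ r, A t r * B t r = Matrix.trace (Aᵀ * B) := by
  rw [Matrix.trace]
  simp only [Matrix.diag, Matrix.mul_apply, Matrix.transpose_apply]
  rw [Finset.sum_comm]

theorem stmt6 {m n p : ℕ} (Y : Matrix (Fin m) (Fin n) ℝ)
    (U : Matrix (Fin m) (Fin p) ℝ) (V : Matrix (Fin n) (Fin p) ℝ) (σ : Fin p → ℝ)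
    (hU : Uᵀ * U = 1) (hV : Vᵀ * V = 1)
    (hσ : ∀ i, 0 ≤ σ i) (hsort : Antitone σ)
    (hY : Y = U * Matrix.diagonal σ * Vᵀ)
    (τ : ℝ) (hτ : 0 < τ) :
    let Xstar : Matrix (Fin m) (Fin n) ℝ :=
      U * Matrix.diagonal (fun i => max (σ i - τ) 0) * Vᵀ
    ∀ X : Matrix (Fin m) (Fin n) ℝ,
      τ * nuclearNorm Xstar + (1 / 2) * ∑ i, ∑ j, (Xstar i j - Y i j) ^ 2 ≤
        τ * nuclearNorm X + (1 / 2) * ∑ i, ∑ j, (X i j - Y i j) ^ 2 := by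
  intro Xstar X
  set d : Fin p → ℝ := fun i => max (σ i - τ) 0 with hdd
  set c : Fin p → ℝ := fun i => min (σ i) τ with hcc
  have hXs : Xstar = U * Matrix.diagonal d * Vᵀ := rfl
  set G : Matrix (Fin m) (Fin n) ℝ := U * Matrix.diagonal c * Vᵀ with hGG
  have hdnn : ∀ i, 0 ≤ d i := fun i => le_max_right _ _
  have hcnn : ∀ i, 0 ≤ c i := fun i => le_min (hσ i) hτ.le
  have hcle : ∀ i, c i ≤ τ := fun i => min_le_right _ _
  have hdc : ∀ i, d i + c i = σ i := by
    intro i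
    rcases le_total (σ i) τ with h | h
    · have h1 : max (σ i - τ) 0 = 0 := max_eq_right (by linarith)
      have h2 : min (σ i) τ = σ i := min_eq_left h
      simp only [hdd, hcc, h1, h2, zero_add]
    · have h1 : max (σ i - τ) 0 = σ i - τ := max_eq_left (by linarith)
      have h2 : min (σ i) τ = τ := min_eq_right h
      simp only [hdd, hcc, h1, h2]; ring
  have hdcτ : ∀ i, d i * c i = τ * d i := by
    intro i
    rcases le_total (σ i) τ with h | h
    · have h1 : d i = 0 := max_eq_right (by linarith)
      rw [h1]; ring
    · have h2 : c i = τ := min_eq_right h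
      rw [h2]; ring
  have hUcol : ∀ i l, ∑ t, U t i * U t l = if i = l then 1 else 0 := by
    intro i l
    have := congrFun (congrFun hU i) l
    rw [Matrix.mul_apply, Matrix.one_apply] at this
    simpa [Matrix.transpose_apply] using this
  have hVcol : ∀ i l, ∑ t, V t i * V t l = if i = l then 1 else 0 := by
    intro i l
    have := congrFun (congrFun hV i) l
    rw [Matrix.mul_apply, Matrix.one_apply] at this
    simpa [Matrix.transpose_apply] using this
  -- Y = Xstar + G
  have hsplit : ∀ t r, Y t r = Xstar t r + G t r := by
    intro t r
    have hYe : Y = U * (Matrix.diagonal d + Matrix.diagonal c) * Vᵀ := by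
      rw [hY, Matrix.diagonal_add, show (fun i => d i + c i) = σ from funext fun i => hdc i]
    rw [hYe, Matrix.mul_add, Matrix.add_mul, hXs]
    rfl
  -- ⟨Xstar, G⟩ = τ * ∑ d
  have hXsG : ∑ t, ∑ r, Xstar t r * G t r = τ * ∑ i, d i := by
    rw [frob_eq_trace, hXs, hGG]
    have h1 : (U * Matrix.diagonal d * Vᵀ)ᵀ = V * Matrix.diagonal d * Uᵀ := by
      rw [Matrix.transpose_mul, Matrix.transpose_mul, Matrix.transpose_transpose,
        Matrix.diagonal_transpose, Matrix.mul_assoc]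
    rw [h1]
    have h2 : V * Matrix.diagonal d * Uᵀ * (U * Matrix.diagonal c * Vᵀ)
        = V * (Matrix.diagonal d * Matrix.diagonal c) * Vᵀ := by
      have e : V * Matrix.diagonal d * Uᵀ * (U * Matrix.diagonal c * Vᵀ)
          = V * (Matrix.diagonal d * ((Uᵀ * U) * (Matrix.diagonal c * Vᵀ))) := by
        simp only [Matrix.mul_assoc]
      rw [e, hU, Matrix.one_mul]
      simp only [Matrix.mul_assoc]
    rw [h2, Matrix.diagonal_mul_diagonal]
    have h3 : Matrix.trace (V * Matrix.diagonal (fun i => d i * c i) * Vᵀ)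
        = Matrix.trace (Matrix.diagonal (fun i => d i * c i) * (Vᵀ * V)) := by
      rw [Matrix.mul_assoc, Matrix.trace_mul_comm, Matrix.mul_assoc]
    rw [h3, hV, Matrix.mul_one, Matrix.trace_diagonal]
    rw [Finset.mul_sum]
    exact Finset.sum_congr rfl fun i _ => hdcτ i
  -- ⟨X, G⟩ = ∑ c i ⟨u i, X v i⟩
  have hXG : ∑ t, ∑ r, X t r * G t r
      = ∑ i, c i * (∑ t, U t i * (X *ᵥ fun r => V r i) t) := by
    rw [frob_eq_trace, hGG]
    have h1 : Xᵀ * (U * Matrix.diagonal c * Vᵀ)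
        = Xᵀ * U * Matrix.diagonal c * Vᵀ := by simp only [Matrix.mul_assoc]
    rw [h1, Matrix.trace_mul_comm, ← Matrix.mul_assoc, Matrix.trace_mul_comm]
    -- trace (diagonal c * (Vᵀ * Xᵀ * U))  hopefully
    rw [Matrix.trace]
    have h2 : ∀ i, (Matrix.diagonal c * (Vᵀ * (Xᵀ * U))) i i
        = c i * (∑ t, U t i * (X *ᵥ fun r => V r i) t) := by
      intro i
      rw [Matrix.diagonal_mul]
      congr 1
      rw [Matrix.mul_apply]
      have h3 : ∀ r, Vᵀ i r * (Xᵀ * U) r i = ∑ t, V r i * (X t r * U t i) := by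
        intro r
        rw [Matrix.transpose_apply, Matrix.mul_apply, Finset.mul_sum]
        exact Finset.sum_congr rfl fun t _ => by rw [Matrix.transpose_apply]
      rw [Finset.sum_congr rfl fun r _ => h3 r, Finset.sum_comm]
      refine Finset.sum_congr rfl fun t _ => ?_
      rw [show U t i * (X *ᵥ fun r => V r i) t = ∑ r, U t i * (X t r * V r i) from by
        rw [show (X *ᵥ fun r => V r i) t = ∑ r, X t r * V r i from rfl, Finset.mul_sum]]
      exact Finset.sum_congr rfl fun r _ => by ring
    simp only [Matrix.diag]
    exact Finset.sum_congr rfl fun i _ => h2 i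
  -- bound ⟨X, G⟩ ≤ τ * nuclearNorm X
  have hbesselU : ∀ x : Fin m → ℝ,
      ∑ i, (∑ t, (fun (i : Fin p) (t : Fin m) => U t i) i t * x t) ^ 2 ≤ ∑ t, x t ^ 2 :=
    bessel _ (fun _ => 1) (fun _ => Or.inr rfl) (fun i l => hUcol i l)
  have hbesselV : ∀ x : Fin n → ℝ,
      ∑ i, (∑ t, (fun (i : Fin p) (t : Fin n) => V t i) i t * x t) ^ 2 ≤ ∑ t, x t ^ 2 :=
    bessel _ (fun _ => 1) (fun _ => Or.inr rfl) (fun i l => hVcol i l)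
  have hnuc := nuclear_ge X (fun i t => U t i) (fun i r => V r i) hbesselU hbesselV
  have hXGle : ∑ t, ∑ r, X t r * G t r ≤ τ * nuclearNorm X := by
    rw [hXG]
    calc ∑ i, c i * (∑ t, U t i * (X *ᵥ fun r => V r i) t)
        ≤ ∑ i, τ * |∑ t, U t i * (X *ᵥ fun r => V r i) t| := by
          refine Finset.sum_le_sum fun i _ => ?_
          set z := ∑ t, U t i * (X *ᵥ fun r => V r i) t
          nlinarith [le_abs_self z, abs_nonneg z, hcnn i, hcle i]
      _ = τ * ∑ i, |∑ t, U t i * (X *ᵥ fun r => V r i) t| := by rw [Finset.mul_sum]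
      _ ≤ τ * nuclearNorm X := mul_le_mul_of_nonneg_left hnuc hτ.le
  -- nuclearNorm Xstar ≤ ∑ d
  have hnucXs : nuclearNorm Xstar ≤ ∑ i, d i := by
    rw [hXs]
    exact nuclear_le U V d hdnn hUcol hVcol
  have hnucXsτ : τ * nuclearNorm Xstar ≤ τ * ∑ i, d i :=
    mul_le_mul_of_nonneg_left hnucXs hτ.le
  -- quadratic expansion
  have hF2 : ∑ t, ∑ r, (X t r - Y t r) ^ 2
      = ∑ t, ∑ r, (Xstar t r - Y t r) ^ 2 + 2 * (∑ t, ∑ r, Xstar t r * G t r)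
        - 2 * (∑ t, ∑ r, X t r * G t r) + ∑ t, ∑ r, (X t r - Xstar t r) ^ 2 := by
    have e1 : ∀ t r, (X t r - Y t r) ^ 2
        = (Xstar t r - Y t r) ^ 2 + 2 * (Xstar t r * G t r) - 2 * (X t r * G t r)
          + (X t r - Xstar t r) ^ 2 := by
      intro t r; rw [hsplit t r]; ring
    rw [Finset.sum_congr rfl fun t _ => Finset.sum_congr rfl fun r _ => e1 t r]
    simp only [Finset.sum_add_distrib, Finset.sum_sub_distrib, ← Finset.mul_sum]
  have hΔ : 0 ≤ ∑ t, ∑ r, (X t r - Xstar t r) ^ 2 :=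
    Finset.sum_nonneg fun t _ => Finset.sum_nonneg fun r _ => sq_nonneg _
  linarith [hF2, hXsG, hXGle, hnucXsτ, hΔ]
end

section
/- If X ∈ M_{≤r} has rank s < r, G ∈ ℝ^{m×n}, and Ξ_{r−s} is a best rank-(r−s) approximation of G − P_{T_X M_s}(G) whose column and row spaces are orthogonal to those of X, then ⟨G, Ξ_{r−s}⟩ = ‖Ξ_{r−s}‖_F². -/
open Matrix BigOperators

/-- Frobenius norm. -/
noncomputable def frobNorm {m n : ℕ} (X : Matrix (Fin m) (Fin n) ℝ) : ℝ :=
  Real.sqrt (∑ i, ∑ j, (X i j) ^ 2)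

theorem stmt19 {m n s r : ℕ} (hsr : s < r)
    (X : Matrix (Fin m) (Fin n) ℝ)
    (U : Matrix (Fin m) (Fin s) ℝ) (V : Matrix (Fin n) (Fin s) ℝ) (σ : Fin s → ℝ)
    (hU : Uᵀ * U = 1) (hV : Vᵀ * V = 1)
    (hX : X = U * Matrix.diagonal σ * Vᵀ) (hrank : X.rank = s)
    (G : Matrix (Fin m) (Fin n) ℝ)
    (Ξ : Matrix (Fin m) (Fin n) ℝ)
    -- the column and row spaces of Ξ are orthogonal to those of X
    (hcol : Uᵀ * Ξ = 0) (hrow : Ξ * V = 0)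
    (hrankΞ : Ξ.rank ≤ r - s)
    -- Ξ is a best rank-(r-s) approximation of the residual G - P_{T_X M_s}(G)
    (hbest :
      let PU : Matrix (Fin m) (Fin m) ℝ := U * Uᵀ
      let PV : Matrix (Fin n) (Fin n) ℝ := V * Vᵀ
      let R : Matrix (Fin m) (Fin n) ℝ :=
        G - (PU * G * PV + (1 - PU) * G * PV + PU * G * (1 - PV))
      ∀ W : Matrix (Fin m) (Fin n) ℝ, W.rank ≤ r - s → frobNorm (R - Ξ) ≤ frobNorm (R - W)) :
    Matrix.trace (G * Ξᵀ) = ∑ i, ∑ j, (Ξ i j) ^ 2 := by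
  classical
  set PU : Matrix (Fin m) (Fin m) ℝ := U * Uᵀ with hPU
  set PV : Matrix (Fin n) (Fin n) ℝ := V * Vᵀ with hPV
  set R : Matrix (Fin m) (Fin n) ℝ :=
    G - (PU * G * PV + (1 - PU) * G * PV + PU * G * (1 - PV)) with hR
  have hbest' : ∀ W : Matrix (Fin m) (Fin n) ℝ, W.rank ≤ r - s →
      frobNorm (R - Ξ) ≤ frobNorm (R - W) := hbest
  clear hbest
  -- basic orthogonality facts
  have hΞU : Ξᵀ * U = 0 := by
    have := congrArg Matrix.transpose hcol
    simpa [Matrix.transpose_mul] using this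
  have hVΞ : Vᵀ * Ξᵀ = 0 := by
    have := congrArg Matrix.transpose hrow
    simpa [Matrix.transpose_mul] using this
  have hPVΞ : PV * Ξᵀ = 0 := by
    rw [hPV, Matrix.mul_assoc, hVΞ, Matrix.mul_zero]
  have hΞPU : Ξᵀ * PU = 0 := by
    rw [hPU, ← Matrix.mul_assoc, hΞU, Matrix.zero_mul]
  -- trace of G * Ξᵀ equals trace of R * Ξᵀ
  have htr : Matrix.trace (G * Ξᵀ) = Matrix.trace (R * Ξᵀ) := by
    have h1 : (PU * G * PV) * Ξᵀ = 0 := by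
      rw [Matrix.mul_assoc, hPVΞ, Matrix.mul_zero]
    have h2 : ((1 - PU) * G * PV) * Ξᵀ = 0 := by
      rw [Matrix.mul_assoc, hPVΞ, Matrix.mul_zero]
    have h3 : Matrix.trace ((PU * G * (1 - PV)) * Ξᵀ) = 0 := by
      rw [Matrix.trace_mul_comm, ← Matrix.mul_assoc, ← Matrix.mul_assoc, hΞPU,
        Matrix.zero_mul, Matrix.zero_mul, Matrix.trace_zero]
    rw [hR, Matrix.sub_mul, Matrix.add_mul, Matrix.add_mul, h1, h2, Matrix.trace_sub,
      Matrix.trace_add, Matrix.trace_add, h3]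
    simp
  -- inner products as sums
  have htr' : Matrix.trace (R * Ξᵀ) = ∑ i, ∑ j, R i j * Ξ i j := by
    simp [Matrix.trace, Matrix.diag, Matrix.mul_apply, Matrix.transpose_apply]
  set a : ℝ := ∑ i, ∑ j, R i j * Ξ i j with ha
  set b : ℝ := ∑ i, ∑ j, (Ξ i j) ^ 2 with hb
  have hb0 : 0 ≤ b := Finset.sum_nonneg fun i _ =>
    Finset.sum_nonneg fun j _ => sq_nonneg _
  rcases eq_or_lt_of_le hb0 with hb0' | hbpos
  · -- b = 0 ⇒ Ξ = 0
    have hΞ0 : Ξ = 0 := by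
      ext i j
      have h1 : ∑ j, (Ξ i j) ^ 2 = 0 := by
        have := (Finset.sum_eq_zero_iff_of_nonneg
          (fun i _ => Finset.sum_nonneg fun j _ => sq_nonneg (Ξ i j))).mp hb0'.symm
        exact this i (Finset.mem_univ i)
      have h2 : (Ξ i j) ^ 2 = 0 :=
        (Finset.sum_eq_zero_iff_of_nonneg (fun j _ => sq_nonneg (Ξ i j))).mp h1 j
          (Finset.mem_univ j)
      simpa using pow_eq_zero_iff (n := 2) (by norm_num) |>.mp h2
    rw [hΞ0]
    simp
    exact hb0'
  · -- b > 0 : use optimality with W = (a/b) • Ξ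
    have expand : ∀ t : ℝ,
        (∑ i, ∑ j, ((R - t • Ξ) i j) ^ 2)
          = (∑ i, ∑ j, (R i j) ^ 2) - 2 * t * a + t ^ 2 * b := by
      intro t
      have : ∀ i j, ((R - t • Ξ) i j) ^ 2
          = (R i j) ^ 2 - 2 * t * (R i j * Ξ i j) + t ^ 2 * (Ξ i j) ^ 2 := by
        intro i j
        simp only [Matrix.sub_apply, Matrix.smul_apply, smul_eq_mul]
        ring
      simp_rw [this, Finset.sum_add_distrib, Finset.sum_sub_distrib, ← Finset.mul_sum]
      rw [ha, hb]
    clear_value a b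
    set t : ℝ := a / b with ht
    clear_value t
    have hrankW : (t • Ξ).rank ≤ r - s := by
      have heq : t • Ξ = (t • (1 : Matrix (Fin m) (Fin m) ℝ)) * Ξ := by
        rw [Matrix.smul_mul, Matrix.one_mul]
      calc (t • Ξ).rank = ((t • (1 : Matrix (Fin m) (Fin m) ℝ)) * Ξ).rank := by rw [heq]
        _ ≤ Ξ.rank := Matrix.rank_mul_le_right _ _
        _ ≤ r - s := hrankΞ
    have hineq := hbest' (t • Ξ) hrankW
    have hRΞ : R - Ξ = R - (1 : ℝ) • Ξ := by simp
    have hsq : (∑ i, ∑ j, ((R - Ξ) i j) ^ 2) ≤ ∑ i, ∑ j, ((R - t • Ξ) i j) ^ 2 := by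
      have hnn : 0 ≤ ∑ i, ∑ j, ((R - t • Ξ) i j) ^ 2 :=
        Finset.sum_nonneg fun i _ => Finset.sum_nonneg fun j _ => sq_nonneg _
      unfold frobNorm at hineq
      exact (Real.sqrt_le_sqrt_iff hnn).mp hineq
    rw [hRΞ] at hsq
    rw [expand 1, expand t] at hsq
    have hkey : -2 * a + b ≤ -2 * t * a + t ^ 2 * b := by linarith
    have htb : t * b = a := by
      rw [ht]; field_simp
    have h4 : (a - b) ^ 2 ≤ 0 := by
      nlinarith [mul_le_mul_of_nonneg_right hkey hb0, htb]
    have h5 : (a - b) ^ 2 = 0 := le_antisymm h4 (sq_nonneg _)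
    have hab : a = b := by
      have := pow_eq_zero_iff (n := 2) (by norm_num) |>.mp h5
      linarith
    rw [htr, htr', hab, hb]
end
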